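/- arXiv:2602.14468 — 8 statements merged into one kernel-verified Lean document; each statement's English description precedes it below -/
import Mathlib

section
/- Let Ω be a measurable space, π a probability measure on Ω, L : Ω → ℝ a measurable function with 0 ≤ L(o) ≤ L_max for π-almost every o, where L_max and B are real numbers with 0 < B < L_max. If ∫ L dπ ≤ B, then (1/B) · ∫ max(L(o) − B, 0) dπ(o) ≤ (L_max − B) / L_max. -/
open MeasureTheory

/-- Feasibility bound on the expected clipped length cost: if `π` is a probability
measure, `0 ≤ L ≤ L_max` `π`-a.e. with `0 < B < L_max`, and the average length
`∫ L dπ` is at most `B`, then `(1/B)·∫ max (L - B) 0 dπ ≤ (L_max - B)/L_max`. -/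
theorem clipped_cost_feasible_bound {Ω : Type*} [MeasurableSpace Ω]
    (π : Measure Ω) [IsProbabilityMeasure π]
    (L : Ω → ℝ) (hLmeas : Measurable L)
    (Lmax B : ℝ) (hB : 0 < B) (hBLmax : B < Lmax)
    (hbdd : ∀ᵐ o ∂π, 0 ≤ L o ∧ L o ≤ Lmax)
    (hfeas : (∫ o, L o ∂π) ≤ B) :
    (1 / B) * ∫ o, max (L o - B) 0 ∂π ≤ (Lmax - B) / Lmax := by
  have hLmax : (0:ℝ) < Lmax := hB.trans hBLmax
  set c : ℝ := (Lmax - B) / Lmax with hc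
  have hc0 : 0 ≤ c := div_nonneg (by linarith) hLmax.le
  have hLint : Integrable L π := by
    apply (integrable_const Lmax).mono' hLmeas.aestronglyMeasurable
    filter_upwards [hbdd] with o ⟨h0, h1⟩
    rw [Real.norm_eq_abs, abs_of_nonneg h0]; exact h1
  have hptwise : ∀ᵐ o ∂π, max (L o - B) 0 ≤ c * L o := by
    filter_upwards [hbdd] with o ⟨h0, h1⟩
    rcases le_total (L o) B with h | h
    · simpa [max_eq_right (by linarith : L o - B ≤ 0)] using
        mul_nonneg hc0 h0
    · rw [max_eq_left (by linarith : (0:ℝ) ≤ L o - B), hc, div_mul_eq_mul_div,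
        le_div_iff₀ hLmax]
      nlinarith
  have hmaxint : Integrable (fun o => max (L o - B) 0) π := by
    apply (integrable_const (max (Lmax - B) 0)).mono'
      ((hLmeas.sub measurable_const).max measurable_const).aestronglyMeasurable
    filter_upwards [hbdd] with o ⟨h0, h1⟩
    rw [Real.norm_eq_abs, abs_of_nonneg (le_max_right _ _)]
    exact max_le_max (by show L o - B ≤ Lmax - B; linarith) le_rfl
  have h1 : ∫ o, max (L o - B) 0 ∂π ≤ ∫ o, c * L o ∂π :=
    integral_mono_ae hmaxint (hLint.const_mul c) hptwise
  have h2 : ∫ o, c * L o ∂π = c * ∫ o, L o ∂π := integral_const_mul c _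
  have h3 : ∫ o, max (L o - B) 0 ∂π ≤ c * B := by
    calc ∫ o, max (L o - B) 0 ∂π ≤ c * ∫ o, L o ∂π := h1.trans_eq h2
      _ ≤ c * B := mul_le_mul_of_nonneg_left hfeas hc0
  rw [one_div, inv_mul_le_iff₀ hB]
  linarith [h3]
end

section
/- Let Ω be a measurable space, P a nonempty set of probability measures on Ω (the policy class), r : Ω → ℝ a bounded measurable reward, L : Ω → ℝ a measurable length function, and B > 0. Define R(π) = ∫ r dπ, C̃(π) = (1/B)·∫ (L(o) − B) dπ(o), and C(π) = (1/B)·∫ max(L(o) − B, 0) dπ(o). Let λ♯ ≥ 0 and suppose π♯ ∈ P maximizes π ↦ R(π) − λ♯ · C(π) over all π ∈ P, and that C̃(π♯) ≤ 0. Let π⋆ ∈ P maximize R over {π ∈ P : C̃(π) ≤ 0}. Then 0 ≤ R(π⋆) − R(π♯) ≤ λ♯ · C(π⋆). -/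
open MeasureTheory

/-- Price of the clipped cost: if `π♯` maximizes the clipped-cost Lagrangian
`R(π) - λ♯·C(π)` over the policy class `P` and is feasible (`C̃(π♯) ≤ 0`), and `π⋆`
is an optimal feasible policy, then `0 ≤ R(π⋆) - R(π♯) ≤ λ♯ · C(π⋆)`. -/
theorem price_of_clipped_cost {Ω : Type*} [MeasurableSpace Ω]
    (P : Set (Measure Ω)) (hPne : P.Nonempty)
    (hPprob : ∀ π ∈ P, IsProbabilityMeasure π)
    (r : Ω → ℝ) (hrmeas : Measurable r) (hrbdd : ∃ M : ℝ, ∀ o, |r o| ≤ M)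
    (L : Ω → ℝ) (hLmeas : Measurable L)
    (B : ℝ) (hB : 0 < B)
    (R : Measure Ω → ℝ) (hR : ∀ π, R π = ∫ o, r o ∂π)
    (Ct : Measure Ω → ℝ) (hCt : ∀ π, Ct π = (1 / B) * ∫ o, (L o - B) ∂π)
    (C : Measure Ω → ℝ) (hC : ∀ π, C π = (1 / B) * ∫ o, max (L o - B) 0 ∂π)
    (lam : ℝ) (hlam : 0 ≤ lam)
    (πsharp : Measure Ω) (hπsharpP : πsharp ∈ P)
    (hπsharpOpt : ∀ π ∈ P, R π - lam * C π ≤ R πsharp - lam * C πsharp)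
    (hπsharpFeas : Ct πsharp ≤ 0)
    (πstar : Measure Ω) (hπstarP : πstar ∈ P) (hπstarFeas : Ct πstar ≤ 0)
    (hπstarOpt : ∀ π ∈ P, Ct π ≤ 0 → R π ≤ R πstar) :
    0 ≤ R πstar - R πsharp ∧ R πstar - R πsharp ≤ lam * C πstar := by
  have h1 := hπstarOpt πsharp hπsharpP hπsharpFeas
  have h2 := hπsharpOpt πstar hπstarP
  have hCs : 0 ≤ C πsharp := by
    rw [hC]
    have : 0 ≤ ∫ o, max (L o - B) 0 ∂πsharp :=
      integral_nonneg fun o => le_max_right _ _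
    positivity
  have := mul_nonneg hlam hCs
  constructor <;> linarith
end

section
/- Let Ω be a measurable space, P a nonempty set of probability measures on Ω (the policy class), r : Ω → ℝ a bounded measurable reward, L : Ω → ℝ a measurable length function, and let B, L_max be real numbers with 0 < B < L_max. Define R(π) = ∫ r dπ, C̃(π) = (1/B)·∫ (L(o) − B) dπ(o), and C(π) = (1/B)·∫ max(L(o) − B, 0) dπ(o). Suppose every π ∈ P satisfies 0 ≤ L(o) ≤ L_max for π-almost every o. Let 0 ≤ λ♯ ≤ B/(L_max − B), suppose π♯ ∈ P maximizes π ↦ R(π) − λ♯ · C(π) over P with C̃(π♯) ≤ 0, and let π⋆ ∈ P maximize R over {π ∈ P : C̃(π) ≤ 0}. Then 0 ≤ R(π⋆) − R(π♯) ≤ B / L_max. -/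
open MeasureTheory

/-- Ceiling-based price of the clipped cost: with lengths bounded in `[0, L_max]`
a.e. for every policy in the class, a dual multiplier `0 ≤ λ♯ ≤ B/(L_max - B)`,
a feasible maximizer `π♯` of the clipped-cost Lagrangian, and an optimal feasible
policy `π⋆`, we have `0 ≤ R(π⋆) - R(π♯) ≤ B / L_max`. -/
theorem price_of_clipped_cost_ceiling {Ω : Type*} [MeasurableSpace Ω]
    (P : Set (Measure Ω)) (hPne : P.Nonempty)
    (hPprob : ∀ π ∈ P, IsProbabilityMeasure π)
    (r : Ω → ℝ) (hrmeas : Measurable r) (hrbdd : ∃ M : ℝ, ∀ o, |r o| ≤ M)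
    (L : Ω → ℝ) (hLmeas : Measurable L)
    (B Lmax : ℝ) (hB : 0 < B) (hBLmax : B < Lmax)
    (R : Measure Ω → ℝ) (hR : ∀ π, R π = ∫ o, r o ∂π)
    (Ct : Measure Ω → ℝ) (hCt : ∀ π, Ct π = (1 / B) * ∫ o, (L o - B) ∂π)
    (C : Measure Ω → ℝ) (hC : ∀ π, C π = (1 / B) * ∫ o, max (L o - B) 0 ∂π)
    (hLbdd : ∀ π ∈ P, ∀ᵐ o ∂π, 0 ≤ L o ∧ L o ≤ Lmax)
    (lam : ℝ) (hlam0 : 0 ≤ lam) (hlamceil : lam ≤ B / (Lmax - B))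
    (πsharp : Measure Ω) (hπsharpP : πsharp ∈ P)
    (hπsharpOpt : ∀ π ∈ P, R π - lam * C π ≤ R πsharp - lam * C πsharp)
    (hπsharpFeas : Ct πsharp ≤ 0)
    (πstar : Measure Ω) (hπstarP : πstar ∈ P) (hπstarFeas : Ct πstar ≤ 0)
    (hπstarOpt : ∀ π ∈ P, Ct π ≤ 0 → R π ≤ R πstar) :
    0 ≤ R πstar - R πsharp ∧ R πstar - R πsharp ≤ B / Lmax := by
  haveI hprobS : IsProbabilityMeasure πstar := hPprob πstar hπstarP
  have hLm : (0:ℝ) < Lmax := hB.trans hBLmax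
  have hLmB : (0:ℝ) < Lmax - B := by linarith
  have h0 : R πsharp ≤ R πstar := hπstarOpt πsharp hπsharpP hπsharpFeas
  refine ⟨by linarith, ?_⟩
  -- integrability of L wrt πstar
  have hLint : Integrable L πstar := by
    refine (integrable_const Lmax).mono' hLmeas.aestronglyMeasurable ?_
    filter_upwards [hLbdd πstar hπstarP] with o ho
    rw [Real.norm_eq_abs, abs_le]
    exact ⟨by linarith [ho.1], ho.2⟩
  have hmaxint : Integrable (fun o => max (L o - B) 0) πstar := by
    refine (integrable_const Lmax).mono'
      (((hLmeas.sub measurable_const).max measurable_const).aestronglyMeasurable) ?_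
    filter_upwards [hLbdd πstar hπstarP] with o ho
    rw [Real.norm_eq_abs, abs_le]
    constructor
    · have : (0:ℝ) ≤ max (L o - B) 0 := le_max_right _ _
      linarith
    · have : max (L o - B) 0 ≤ L o := by
        apply max_le
        · linarith
        · exact ho.1
      linarith [ho.2]
  -- C πsharp ≥ 0
  have hCs : 0 ≤ C πsharp := by
    rw [hC]
    apply mul_nonneg (by positivity)
    apply integral_nonneg
    intro o; exact le_max_right _ _
  -- ∫ L ∂πstar ≤ B
  have hIL : ∫ o, L o ∂πstar ≤ B := by
    have hfe := hπstarFeas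
    rw [hCt] at hfe
    have h1 : ∫ o, (L o - B) ∂πstar ≤ 0 := by
      by_contra h
      push_neg at h
      have := mul_pos (by positivity : (0:ℝ) < 1 / B) h
      linarith
    have h2 : ∫ o, (L o - B) ∂πstar = (∫ o, L o ∂πstar) - B := by
      rw [integral_sub hLint (integrable_const B), integral_const]
      simp
    linarith
  -- pointwise bound
  have hpt : ∀ᵐ o ∂πstar, max (L o - B) 0 ≤ ((Lmax - B) / Lmax) * L o := by
    filter_upwards [hLbdd πstar hπstarP] with o ho
    apply max_le
    · rw [div_mul_eq_mul_div, le_div_iff₀ hLm]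
      nlinarith [ho.2]
    · exact mul_nonneg (by positivity) ho.1
  have hCb : C πstar ≤ (Lmax - B) / Lmax := by
    rw [hC]
    have h1 : ∫ o, max (L o - B) 0 ∂πstar ≤ ∫ o, ((Lmax - B) / Lmax) * L o ∂πstar :=
      integral_mono_ae hmaxint (hLint.const_mul _) hpt
    rw [integral_const_mul _ L] at h1
    have h2 : ((Lmax - B) / Lmax) * ∫ o, L o ∂πstar ≤ ((Lmax - B) / Lmax) * B :=
      mul_le_mul_of_nonneg_left hIL (by positivity)
    have h3 : (1 / B) * ∫ o, max (L o - B) 0 ∂πstar ≤ (1 / B) * (((Lmax - B) / Lmax) * B) := by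
      apply mul_le_mul_of_nonneg_left (by linarith) (by positivity)
    calc (1 / B) * ∫ o, max (L o - B) 0 ∂πstar
        ≤ (1 / B) * (((Lmax - B) / Lmax) * B) := h3
      _ = (Lmax - B) / Lmax := by field_simp
  have hLag := hπsharpOpt πstar hπstarP
  have h1 : lam * C πstar ≤ lam * ((Lmax - B) / Lmax) :=
    mul_le_mul_of_nonneg_left hCb hlam0
  have h2 : lam * ((Lmax - B) / Lmax) ≤ (B / (Lmax - B)) * ((Lmax - B) / Lmax) :=
    mul_le_mul_of_nonneg_right hlamceil (by positivity)
  have heq : (B / (Lmax - B)) * ((Lmax - B) / Lmax) = B / Lmax := by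
    field_simp
  have hCs' : 0 ≤ lam * C πsharp := mul_nonneg hlam0 hCs
  linarith
end

section
/- Let Λ > 0, γ > 0, and 0 < η ≤ 1/γ. Let μ : ℝ → ℝ be nonincreasing on [0, Λ] and satisfy |μ(λ) − μ(λ')| ≤ γ·|λ − λ'| for all λ, λ' ∈ [0, Λ]. Define T(λ) = max(min(λ + η·μ(λ), Λ), 0). Then for every fixed point λ♯ ∈ [0, Λ] of T and every λ ∈ [0, Λ], |T(λ) − λ♯| ≤ |λ − λ♯|. -/
/-- Fejér monotonicity of the projected dual update: with `μ` nonincreasing and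
`γ`-Lipschitz on `[0, Λ]` and step size `0 < η ≤ 1/γ`, one dual update
`T(λ) = clip(λ + η·μ(λ), 0, Λ)` does not increase the distance to any fixed point
`λ♯ ∈ [0, Λ]` of `T`. -/
theorem dual_update_fejer (Λ γ η : ℝ) (hΛ : 0 < Λ) (hγ : 0 < γ)
    (hη : 0 < η) (hηγ : η ≤ 1 / γ)
    (μ : ℝ → ℝ) (hmono : AntitoneOn μ (Set.Icc 0 Λ))
    (hlip : ∀ a ∈ Set.Icc (0:ℝ) Λ, ∀ b ∈ Set.Icc (0:ℝ) Λ, |μ a - μ b| ≤ γ * |a - b|)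
    (T : ℝ → ℝ) (hT : ∀ x, T x = max (min (x + η * μ x) Λ) 0)
    (lamsharp : ℝ) (hsharp : lamsharp ∈ Set.Icc 0 Λ) (hfix : T lamsharp = lamsharp)
    (lam : ℝ) (hlam : lam ∈ Set.Icc 0 Λ) :
    |T lam - lamsharp| ≤ |lam - lamsharp| := by
  have hηγ1 : η * γ ≤ 1 := by
    rw [le_div_iff₀ hγ] at hηγ; linarith
  -- nonexpansiveness of x ↦ x + η μ x on [0, Λ]
  have key : ∀ x ∈ Set.Icc (0:ℝ) Λ, ∀ y ∈ Set.Icc (0:ℝ) Λ, y ≤ x →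
      |(x + η * μ x) - (y + η * μ y)| ≤ |x - y| := by
    intro x hx y hy hyx
    have h1 : μ x ≤ μ y := hmono hy hx hyx
    have h2 : |μ y - μ x| ≤ γ * |y - x| := hlip y hy x hx
    have h3 : μ y - μ x ≤ γ * (x - y) := by
      rw [abs_of_nonneg (by linarith), abs_sub_comm, abs_of_nonneg (by linarith)] at h2
      linarith
    have hub : (x + η * μ x) - (y + η * μ y) ≤ x - y := by nlinarith
    have hlb : 0 ≤ (x + η * μ x) - (y + η * μ y) := by nlinarith
    rw [abs_of_nonneg hlb, abs_of_nonneg (by linarith)]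
    exact hub
  have key2 : |(lam + η * μ lam) - (lamsharp + η * μ lamsharp)| ≤ |lam - lamsharp| := by
    rcases le_total lamsharp lam with h | h
    · exact key lam hlam lamsharp hsharp h
    · rw [abs_sub_comm, abs_sub_comm lam]
      exact key lamsharp hsharp lam hlam h
  have hfix' : max (min (lamsharp + η * μ lamsharp) Λ) 0 = lamsharp := by
    rw [← hT]; exact hfix
  calc |T lam - lamsharp|
      = |max (min (lam + η * μ lam) Λ) 0 - max (min (lamsharp + η * μ lamsharp) Λ) 0| := by
        rw [hT lam, hfix']
    _ ≤ |min (lam + η * μ lam) Λ - min (lamsharp + η * μ lamsharp) Λ| :=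
        abs_max_sub_max_le_abs _ _ _
    _ ≤ |(lam + η * μ lam) - (lamsharp + η * μ lamsharp)| := by
        have := abs_min_sub_min_le_max (lam + η * μ lam) Λ (lamsharp + η * μ lamsharp) Λ
        simpa using this
    _ ≤ |lam - lamsharp| := key2
end

section
/- Let Λ > 0, γ > 0, and 0 < η ≤ 1/γ. Let μ : ℝ → ℝ be nonincreasing on [0, Λ], satisfy |μ(λ) − μ(λ')| ≤ γ·|λ − λ'| for all λ, λ' ∈ [0, Λ], and satisfy μ(Λ) ≤ 0. Define T(λ) = max(min(λ + η·μ(λ), Λ), 0), and for any λ₀ ∈ [0, Λ] let the sequence (λ_t) be defined by λ_{t+1} = T(λ_t). Then (λ_t) converges to some λ♯ ∈ [0, Λ] with T(λ♯) = λ♯ (and hence μ(λ♯) ≤ 0). -/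
/-- Convergence of the projected dual iterates: with `μ` nonincreasing and
`γ`-Lipschitz on `[0, Λ]`, `μ(Λ) ≤ 0`, and step size `0 < η ≤ 1/γ`, the iterates
`λ_{t+1} = T(λ_t)` of `T(λ) = clip(λ + η·μ(λ), 0, Λ)` started at any `λ₀ ∈ [0, Λ]`
converge to a fixed point `λ♯ ∈ [0, Λ]` of `T`, which moreover satisfies `μ(λ♯) ≤ 0`. -/
theorem dual_update_converges (Λ γ η : ℝ) (hΛ : 0 < Λ) (hγ : 0 < γ)
    (hη : 0 < η) (hηγ : η ≤ 1 / γ)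
    (μ : ℝ → ℝ) (hmono : AntitoneOn μ (Set.Icc 0 Λ))
    (hlip : ∀ a ∈ Set.Icc (0:ℝ) Λ, ∀ b ∈ Set.Icc (0:ℝ) Λ, |μ a - μ b| ≤ γ * |a - b|)
    (hμΛ : μ Λ ≤ 0)
    (T : ℝ → ℝ) (hT : ∀ x, T x = max (min (x + η * μ x) Λ) 0)
    (lam : ℕ → ℝ) (hlam0 : lam 0 ∈ Set.Icc 0 Λ)
    (hstep : ∀ t, lam (t + 1) = T (lam t)) :
    ∃ lamsharp ∈ Set.Icc (0:ℝ) Λ,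
      Filter.Tendsto lam Filter.atTop (nhds lamsharp) ∧
      T lamsharp = lamsharp ∧ μ lamsharp ≤ 0 := by
  have hηγ1 : η * γ ≤ 1 := by
    calc η * γ ≤ (1 / γ) * γ := by nlinarith
    _ = 1 := by field_simp
  -- T maps Icc into Icc
  have hTmem : ∀ x, T x ∈ Set.Icc (0:ℝ) Λ := by
    intro x
    rw [hT]
    constructor
    · exact le_max_right _ _
    · exact max_le (min_le_right _ _) hΛ.le
  have hmem : ∀ t, lam t ∈ Set.Icc (0:ℝ) Λ := by
    intro t
    induction t with
    | zero => exact hlam0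
    | succ n ih => rw [hstep]; exact hTmem _
  -- T is monotone on Icc
  have hTmono : ∀ a ∈ Set.Icc (0:ℝ) Λ, ∀ b ∈ Set.Icc (0:ℝ) Λ, a ≤ b → T a ≤ T b := by
    intro a ha b hb hab
    rw [hT, hT]
    have hkey : a + η * μ a ≤ b + η * μ b := by
      have h1 : μ a - μ b ≤ γ * (b - a) := by
        have := hlip a ha b hb
        have h2 : |a - b| = b - a := by rw [abs_sub_comm]; exact abs_of_nonneg (by linarith)
        calc μ a - μ b ≤ |μ a - μ b| := le_abs_self _
          _ ≤ γ * |a - b| := this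
          _ = γ * (b - a) := by rw [h2]
      nlinarith
    exact max_le_max (min_le_min (by linarith) le_rfl) le_rfl
  -- μ is continuous on Icc
  have hμcont : ContinuousOn μ (Set.Icc 0 Λ) := by
    have : LipschitzOnWith γ.toNNReal μ (Set.Icc 0 Λ) := by
      apply LipschitzOnWith.of_dist_le_mul
      intro a ha b hb
      rw [Real.dist_eq, Real.dist_eq, Real.coe_toNNReal γ hγ.le]
      exact hlip a ha b hb
    exact this.continuousOn
  have hTcont : ContinuousOn T (Set.Icc 0 Λ) := by
    have hTeq : T = (fun y => max (min y Λ) 0) ∘ (fun x => x + η * μ x) := funext hT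
    rw [hTeq]
    have hg : Continuous (fun y : ℝ => max (min y Λ) 0) :=
      (continuous_id.min continuous_const).max continuous_const
    exact hg.comp_continuousOn (continuousOn_id.add (continuousOn_const.mul hμcont))
  -- the sequence is monotone or antitone, hence converges
  have hconv : ∃ L, Filter.Tendsto lam Filter.atTop (nhds L) := by
    rcases le_total (lam 1) (lam 0) with h | h
    · have hanti : ∀ t, lam (t + 1) ≤ lam t := by
        intro t
        induction t with
        | zero => exact h
        | succ n ih =>
          calc lam (n + 2) = T (lam (n + 1)) := hstep _
            _ ≤ T (lam n) := hTmono _ (hmem _) _ (hmem _) ih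
            _ = lam (n + 1) := (hstep n).symm
      have hA : Antitone lam := antitone_nat_of_succ_le hanti
      have hbdd : BddBelow (Set.range lam) := ⟨0, by rintro x ⟨t, rfl⟩; exact (hmem t).1⟩
      exact ⟨_, tendsto_atTop_ciInf hA hbdd⟩
    · have hmon : ∀ t, lam t ≤ lam (t + 1) := by
        intro t
        induction t with
        | zero => exact h
        | succ n ih =>
          calc lam (n + 1) = T (lam n) := hstep _
            _ ≤ T (lam (n + 1)) := hTmono _ (hmem _) _ (hmem _) ih
            _ = lam (n + 2) := (hstep _).symm
      have hM : Monotone lam := monotone_nat_of_le_succ hmon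
      have hbdd : BddAbove (Set.range lam) := ⟨Λ, by rintro x ⟨t, rfl⟩; exact (hmem t).2⟩
      exact ⟨_, tendsto_atTop_ciSup hM hbdd⟩
  obtain ⟨L, hlim⟩ := hconv
  have hL : L ∈ Set.Icc (0:ℝ) Λ :=
    isClosed_Icc.mem_of_tendsto hlim (Filter.Eventually.of_forall hmem)
  -- fixed point
  have hwithin : Filter.Tendsto lam Filter.atTop (nhdsWithin L (Set.Icc 0 Λ)) :=
    tendsto_nhdsWithin_of_tendsto_nhds_of_eventually_within _ hlim
      (Filter.Eventually.of_forall hmem)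
  have hTlim : Filter.Tendsto (fun t => T (lam t)) Filter.atTop (nhds (T L)) :=
    (hTcont L hL).tendsto.comp hwithin
  have hshift : Filter.Tendsto (fun t => lam (t + 1)) Filter.atTop (nhds L) :=
    hlim.comp (Filter.tendsto_add_atTop_nat 1)
  have hfix : T L = L := by
    apply tendsto_nhds_unique hTlim
    have : (fun t => T (lam t)) = fun t => lam (t + 1) := by
      funext t; rw [hstep]
    rw [this]; exact hshift
  -- μ L ≤ 0
  have hμL : μ L ≤ 0 := by
    by_contra hpos
    push_neg at hpos
    rcases eq_or_lt_of_le hL.2 with hLΛ | hLΛ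
    · rw [hLΛ] at hpos; linarith
    · have h1 : L < L + η * μ L := by nlinarith
      have h2 : L < min (L + η * μ L) Λ := lt_min h1 hLΛ
      have h3 : L < max (min (L + η * μ L) Λ) 0 := lt_of_lt_of_le h2 (le_max_left _ _)
      rw [← hT, hfix] at h3
      exact lt_irrefl _ h3
  exact ⟨L, hL, hlim, hfix, hμL⟩
end

section
/- Let Λ > 0, γ > 0, ξ > 0, and 0 < η ≤ min(1/γ, 1/ξ). Let μ : ℝ → ℝ satisfy |μ(λ) − μ(λ')| ≤ γ·|λ − λ'| for all λ, λ' ∈ [0, Λ], and μ(λ) − μ(λ') ≤ −ξ·(λ − λ') for all λ ≥ λ' in [0, Λ]. Define T(λ) = max(min(λ + η·μ(λ), Λ), 0). Suppose λ♯ ∈ [0, Λ] satisfies μ(λ♯) = 0. Then for every λ ∈ [0, Λ], |T(λ) − λ♯| ≤ (1 − η·ξ)·|λ − λ♯|. -/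
lemma clip_lipschitz (Λ x y : ℝ) :
    |max (min x Λ) 0 - max (min y Λ) 0| ≤ |x - y| := by
  have h1 : |max (min x Λ) 0 - max (min y Λ) 0| ≤ |min x Λ - min y Λ| :=
    abs_max_sub_max_le_abs _ _ _
  have h2 : |min x Λ - min y Λ| ≤ max |x - y| |Λ - Λ| := abs_min_sub_min_le_max _ _ _ _
  simp at h2
  linarith

/-- One-step contraction of the dual update: with `μ` `γ`-Lipschitz and
`ξ`-strongly decreasing on `[0, Λ]`, step size `0 < η ≤ min(1/γ, 1/ξ)`, and
`λ♯ ∈ [0, Λ]` with `μ(λ♯) = 0`, the projected update `T(λ) = clip(λ + η·μ(λ), 0, Λ)`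
contracts toward `λ♯` with factor `1 - η·ξ`. -/
theorem dual_update_contraction (Λ γ ξ η : ℝ) (hΛ : 0 < Λ) (hγ : 0 < γ) (hξ : 0 < ξ)
    (hη : 0 < η) (hηmin : η ≤ min (1 / γ) (1 / ξ))
    (μ : ℝ → ℝ)
    (hlip : ∀ a ∈ Set.Icc (0:ℝ) Λ, ∀ b ∈ Set.Icc (0:ℝ) Λ, |μ a - μ b| ≤ γ * |a - b|)
    (hsm : ∀ a ∈ Set.Icc (0:ℝ) Λ, ∀ b ∈ Set.Icc (0:ℝ) Λ, b ≤ a →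
      μ a - μ b ≤ -ξ * (a - b))
    (T : ℝ → ℝ) (hT : ∀ x, T x = max (min (x + η * μ x) Λ) 0)
    (lamsharp : ℝ) (hsharp : lamsharp ∈ Set.Icc 0 Λ) (hzero : μ lamsharp = 0)
    (lam : ℝ) (hlam : lam ∈ Set.Icc 0 Λ) :
    |T lam - lamsharp| ≤ (1 - η * ξ) * |lam - lamsharp| := by
  obtain ⟨hs0, hsΛ⟩ := hsharp
  have hηγ : η * γ ≤ 1 := by
    have := le_trans hηmin (min_le_left _ _)
    rw [le_div_iff₀ hγ] at this; linarith
  have hηξ : η * ξ ≤ 1 := by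
    have := le_trans hηmin (min_le_right _ _)
    rw [le_div_iff₀ hξ] at this; linarith
  have hfix : lamsharp = max (min (lamsharp + η * μ lamsharp) Λ) 0 := by
    rw [hzero]; simp [min_eq_left, max_eq_left, hsΛ, hs0]
  have hstep : |lam + η * μ lam - lamsharp| ≤ (1 - η * ξ) * |lam - lamsharp| := by
    have hl := hlip lam hlam lamsharp ⟨hs0, hsΛ⟩
    rw [hzero, sub_zero] at hl
    rcases le_total lamsharp lam with hle | hle
    · have hs := hsm lam hlam lamsharp ⟨hs0, hsΛ⟩ hle
      rw [hzero, sub_zero] at hs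
      rw [abs_of_nonneg (sub_nonneg.mpr hle)] at hl ⊢
      obtain ⟨hlo, hhi⟩ := abs_le.mp hl
      rw [abs_le]
      exact ⟨by nlinarith, by nlinarith⟩
    · have hs := hsm lamsharp ⟨hs0, hsΛ⟩ lam hlam hle
      rw [hzero, zero_sub] at hs
      rw [abs_of_nonpos (sub_nonpos.mpr hle)] at hl ⊢
      obtain ⟨hlo, hhi⟩ := abs_le.mp hl
      rw [abs_le]
      exact ⟨by nlinarith, by nlinarith⟩
  calc |T lam - lamsharp|
      = |max (min (lam + η * μ lam) Λ) 0 - max (min (lamsharp + η * μ lamsharp) Λ) 0| := by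
        rw [hT, ← hfix]
    _ ≤ |lam + η * μ lam - (lamsharp + η * μ lamsharp)| := clip_lipschitz _ _ _
    _ = |lam + η * μ lam - lamsharp| := by rw [hzero]; ring_nf
    _ ≤ (1 - η * ξ) * |lam - lamsharp| := hstep
end

section
/- Let Λ > 0, γ > 0, ξ > 0, and 0 < η ≤ min(1/γ, 1/ξ). Let μ : ℝ → ℝ satisfy |μ(λ) − μ(λ')| ≤ γ·|λ − λ'| for all λ, λ' ∈ [0, Λ], and μ(λ) − μ(λ') ≤ −ξ·(λ − λ') for all λ ≥ λ' in [0, Λ]. Suppose λ♯ ∈ [0, Λ] satisfies μ(λ♯) = 0. Define T(λ) = max(min(λ + η·μ(λ), Λ), 0), let λ₀ ∈ [0, Λ], and let λ_{t+1} = T(λ_t). Then for every t ≥ 0, |λ_t − λ♯| ≤ (1 − η·ξ)^t · |λ₀ − λ♯|. -/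
/-- Geometric convergence of the dual iterates: with `μ` `γ`-Lipschitz and
`ξ`-strongly decreasing on `[0, Λ]`, step size `0 < η ≤ min(1/γ, 1/ξ)`, and
`λ♯ ∈ [0, Λ]` with `μ(λ♯) = 0`, the iterates `λ_{t+1} = T(λ_t)` of the projected
update `T(λ) = clip(λ + η·μ(λ), 0, Λ)` satisfy
`|λ_t - λ♯| ≤ (1 - η·ξ)^t · |λ₀ - λ♯|`. -/
theorem dual_update_linear_rate (Λ γ ξ η : ℝ) (hΛ : 0 < Λ) (hγ : 0 < γ) (hξ : 0 < ξ)
    (hη : 0 < η) (hηmin : η ≤ min (1 / γ) (1 / ξ))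
    (μ : ℝ → ℝ)
    (hlip : ∀ a ∈ Set.Icc (0:ℝ) Λ, ∀ b ∈ Set.Icc (0:ℝ) Λ, |μ a - μ b| ≤ γ * |a - b|)
    (hsm : ∀ a ∈ Set.Icc (0:ℝ) Λ, ∀ b ∈ Set.Icc (0:ℝ) Λ, b ≤ a →
      μ a - μ b ≤ -ξ * (a - b))
    (lamsharp : ℝ) (hsharp : lamsharp ∈ Set.Icc 0 Λ) (hzero : μ lamsharp = 0)
    (T : ℝ → ℝ) (hT : ∀ x, T x = max (min (x + η * μ x) Λ) 0)
    (lam : ℕ → ℝ) (hlam0 : lam 0 ∈ Set.Icc 0 Λ)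
    (hstep : ∀ t, lam (t + 1) = T (lam t)) :
    ∀ t : ℕ, |lam t - lamsharp| ≤ (1 - η * ξ) ^ t * |lam 0 - lamsharp| := by
  have hηγ : η * γ ≤ 1 := by
    have := hηmin.trans (min_le_left _ _)
    calc η * γ ≤ (1/γ) * γ := by nlinarith
    _ = 1 := by field_simp
  have hηξ : η * ξ ≤ 1 := by
    have := hηmin.trans (min_le_right _ _)
    calc η * ξ ≤ (1/ξ) * ξ := by nlinarith
    _ = 1 := by field_simp
  have hfac : 0 ≤ 1 - η * ξ := by linarith
  -- one-step contraction on [0, Λ]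
  have key : ∀ a ∈ Set.Icc (0:ℝ) Λ, ∀ b ∈ Set.Icc (0:ℝ) Λ,
      |T a - T b| ≤ (1 - η * ξ) * |a - b| := by
    intro a ha b hb
    -- WLOG via symmetry: prove for b ≤ a
    have main : ∀ a ∈ Set.Icc (0:ℝ) Λ, ∀ b ∈ Set.Icc (0:ℝ) Λ, b ≤ a →
        |T a - T b| ≤ (1 - η * ξ) * |a - b| := by
      intro a ha b hb hba
      have h1 : μ a - μ b ≤ -ξ * (a - b) := hsm a ha b hb hba
      have h2 : |μ a - μ b| ≤ γ * |a - b| := hlip a ha b hb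
      rw [abs_of_nonneg (by linarith : (0:ℝ) ≤ a - b)] at h2 ⊢
      have hlow : -(γ * (a - b)) ≤ μ a - μ b := (abs_le.mp h2).1
      -- unclipped difference
      have hup : (a + η * μ a) - (b + η * μ b) ≤ (1 - η * ξ) * (a - b) := by nlinarith
      have hlo : 0 ≤ (a + η * μ a) - (b + η * μ b) := by nlinarith
      -- clipping is 1-Lipschitz and monotone
      have hTa : T a = max (min (a + η * μ a) Λ) 0 := hT a
      have hTb : T b = max (min (b + η * μ b) Λ) 0 := hT b
      have hmono : T b ≤ T a := by
        rw [hTa, hTb]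
        exact max_le_max (min_le_min (by linarith) le_rfl) le_rfl
      have hdiff : T a - T b ≤ (a + η * μ a) - (b + η * μ b) := by
        rw [hTa, hTb]
        have h3 : min (a + η * μ a) Λ - min (b + η * μ b) Λ ≤
            (a + η * μ a) - (b + η * μ b) := by
          rcases le_total (b + η * μ b) Λ with h | h
          · rw [min_eq_left h]
            have := min_le_left (a + η * μ a) Λ; linarith
          · rw [min_eq_right h]
            have : min (a + η * μ a) Λ ≤ Λ := min_le_right _ _
            linarith
        rcases le_total (min (b + η * μ b) Λ) 0 with h | h
        · rw [max_eq_right h]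
          have h4 : max (min (a + η * μ a) Λ) 0 ≤
              min (a + η * μ a) Λ - min (b + η * μ b) Λ := by
            have h6 : min (b + η * μ b) Λ ≤ min (a + η * μ a) Λ :=
              min_le_min (by linarith) le_rfl
            rcases le_total (min (a + η * μ a) Λ) 0 with h5 | h5
            · rw [max_eq_right h5]; linarith
            · rw [max_eq_left h5]; linarith
          linarith
        · rw [max_eq_left h]
          have : max (min (a + η * μ a) Λ) 0 - min (b + η * μ b) Λ ≤
              min (a + η * μ a) Λ - min (b + η * μ b) Λ := by
            have h6 : min (b + η * μ b) Λ ≤ min (a + η * μ a) Λ :=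
              min_le_min (by linarith) le_rfl
            rw [max_eq_left (h.trans h6)]
          linarith
      rw [abs_of_nonneg (by linarith : (0:ℝ) ≤ T a - T b)]
      linarith
    rcases le_total b a with h | h
    · exact main a ha b hb h
    · rw [abs_sub_comm (T a), abs_sub_comm a]; exact main b hb a ha h
  -- T maps into [0, Λ] and fixes lamsharp
  have hrange : ∀ x, T x ∈ Set.Icc (0:ℝ) Λ := by
    intro x
    rw [hT x]
    constructor
    · exact le_max_right _ _
    · exact max_le (min_le_right _ _) hΛ.le
  have hfix : T lamsharp = lamsharp := by
    rw [hT lamsharp, hzero]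
    simp only [mul_zero, add_zero]
    rw [min_eq_left hsharp.2, max_eq_left hsharp.1]
  have hmem : ∀ t, lam t ∈ Set.Icc (0:ℝ) Λ := by
    intro t
    induction t with
    | zero => exact hlam0
    | succ n ih => rw [hstep n]; exact hrange _
  intro t
  induction t with
  | zero => simp
  | succ n ih =>
    rw [hstep n]
    calc |T (lam n) - lamsharp| = |T (lam n) - T lamsharp| := by rw [hfix]
    _ ≤ (1 - η * ξ) * |lam n - lamsharp| := key _ (hmem n) _ hsharp
    _ ≤ (1 - η * ξ) * ((1 - η * ξ) ^ n * |lam 0 - lamsharp|) :=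
        mul_le_mul_of_nonneg_left ih hfac
    _ = (1 - η * ξ) ^ (n + 1) * |lam 0 - lamsharp| := by ring
end

section
/- Let Λ > 0, γ > 0, ξ > 0, and 0 < η ≤ min(1/γ, 1/ξ). Let μ : ℝ → ℝ satisfy |μ(λ) − μ(λ')| ≤ γ·|λ − λ'| for all λ, λ' ∈ [0, Λ], and μ(λ) − μ(λ') ≤ −ξ·(λ − λ') for all λ ≥ λ' in [0, Λ]. Suppose λ♯ ∈ [0, Λ] satisfies μ(λ♯) = 0. Define T(λ) = max(min(λ + η·μ(λ), Λ), 0), let λ₀ ∈ [0, Λ], and let λ_{t+1} = T(λ_t). Then for every t ≥ 0, |μ(λ_t)| ≤ γ·(1 − η·ξ)^t · |λ₀ − λ♯|. -/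
/-- Geometric decay of the constraint violation: under the assumptions of the
linear-rate convergence theorem, the constraint values of the dual iterates satisfy
`|μ(λ_t)| ≤ γ·(1 - η·ξ)^t·|λ₀ - λ♯|`. -/
theorem constraint_violation_linear_rate (Λ γ ξ η : ℝ) (hΛ : 0 < Λ) (hγ : 0 < γ)
    (hξ : 0 < ξ) (hη : 0 < η) (hηmin : η ≤ min (1 / γ) (1 / ξ))
    (μ : ℝ → ℝ)
    (hlip : ∀ a ∈ Set.Icc (0:ℝ) Λ, ∀ b ∈ Set.Icc (0:ℝ) Λ, |μ a - μ b| ≤ γ * |a - b|)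
    (hsm : ∀ a ∈ Set.Icc (0:ℝ) Λ, ∀ b ∈ Set.Icc (0:ℝ) Λ, b ≤ a →
      μ a - μ b ≤ -ξ * (a - b))
    (lamsharp : ℝ) (hsharp : lamsharp ∈ Set.Icc 0 Λ) (hzero : μ lamsharp = 0)
    (T : ℝ → ℝ) (hT : ∀ x, T x = max (min (x + η * μ x) Λ) 0)
    (lam : ℕ → ℝ) (hlam0 : lam 0 ∈ Set.Icc 0 Λ)
    (hstep : ∀ t, lam (t + 1) = T (lam t)) :
    ∀ t : ℕ, |μ (lam t)| ≤ γ * (1 - η * ξ) ^ t * |lam 0 - lamsharp| := by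
  obtain ⟨hsl, hsu⟩ := hsharp
  have hηγ : η * γ ≤ 1 := by
    have h := hηmin.trans (min_le_left _ _)
    rw [le_div_iff₀ hγ] at h; linarith
  have hηξ : η * ξ ≤ 1 := by
    have h := hηmin.trans (min_le_right _ _)
    rw [le_div_iff₀ hξ] at h; linarith
  have hrate : 0 ≤ 1 - η * ξ := by linarith
  have hmem : ∀ t, lam t ∈ Set.Icc (0:ℝ) Λ := by
    intro t
    induction t with
    | zero => exact hlam0
    | succ t _ =>
      rw [hstep, hT]
      exact ⟨le_max_right _ _, max_le ((min_le_right _ _)) hΛ.le⟩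
  have hsharpmem : lamsharp ∈ Set.Icc (0:ℝ) Λ := ⟨hsl, hsu⟩
  -- contraction step
  have hdist : ∀ t, |lam t - lamsharp| ≤ (1 - η * ξ) ^ t * |lam 0 - lamsharp| := by
    intro t
    induction t with
    | zero => simp
    | succ t ih =>
      have ha := hmem t
      obtain ⟨hal, hau⟩ := ha
      -- |T (lam t) - lamsharp| ≤ |(lam t + η μ (lam t)) - (lamsharp + η μ lamsharp)|
      have hfix : lamsharp = max (min (lamsharp + η * μ lamsharp) Λ) 0 := by
        rw [hzero]
        rw [mul_zero, add_zero, min_eq_left hsu, max_eq_left hsl]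
      have hnonexp : |T (lam t) - lamsharp| ≤
          |(lam t + η * μ (lam t)) - (lamsharp + η * μ lamsharp)| := by
        conv_lhs => rw [hT, hfix]
        refine le_trans (abs_max_sub_max_le_abs _ _ _) ?_
        have := abs_min_sub_min_le_max (lam t + η * μ (lam t)) Λ
          (lamsharp + η * μ lamsharp) Λ
        simpa using this
      have hkey : |(lam t + η * μ (lam t)) - (lamsharp + η * μ lamsharp)| ≤
          (1 - η * ξ) * |lam t - lamsharp| := by
        rw [hzero, mul_zero, add_zero]
        have hlipb := hlip (lam t) ⟨hal, hau⟩ lamsharp hsharpmem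
        rw [hzero, sub_zero] at hlipb
        rcases le_total lamsharp (lam t) with hle | hle
        · have hmono := hsm (lam t) ⟨hal, hau⟩ lamsharp hsharpmem hle
          rw [hzero, sub_zero] at hmono
          rw [abs_of_nonneg (sub_nonneg.2 hle)] at hlipb
          obtain ⟨hge, _⟩ := abs_le.mp hlipb
          have hd : (0:ℝ) ≤ lam t - lamsharp := sub_nonneg.2 hle
          have h1 : (0:ℝ) ≤ lam t + η * μ (lam t) - lamsharp := by nlinarith
          rw [abs_of_nonneg hd, abs_of_nonneg h1]
          nlinarith
        · have hmono := hsm lamsharp hsharpmem (lam t) ⟨hal, hau⟩ hle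
          rw [hzero, zero_sub] at hmono
          rw [abs_of_nonpos (sub_nonpos.2 hle)] at hlipb
          obtain ⟨_, hge⟩ := abs_le.mp hlipb
          have hd : lam t - lamsharp ≤ 0 := sub_nonpos.2 hle
          have h1 : lam t + η * μ (lam t) - lamsharp ≤ 0 := by nlinarith
          rw [abs_of_nonpos hd, abs_of_nonpos h1]
          nlinarith
      calc |lam (t+1) - lamsharp| ≤ (1 - η*ξ) * |lam t - lamsharp| := by
            rw [hstep t]; exact le_trans hnonexp hkey
        _ ≤ (1 - η*ξ) * ((1 - η*ξ)^t * |lam 0 - lamsharp|) :=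
            mul_le_mul_of_nonneg_left ih hrate
        _ = (1 - η*ξ)^(t+1) * |lam 0 - lamsharp| := by ring
  intro t
  have hlipb := hlip (lam t) (hmem t) lamsharp hsharpmem
  rw [hzero, sub_zero] at hlipb
  calc |μ (lam t)| ≤ γ * |lam t - lamsharp| := hlipb
    _ ≤ γ * ((1 - η*ξ)^t * |lam 0 - lamsharp|) :=
        mul_le_mul_of_nonneg_left (hdist t) hγ.le
    _ = γ * (1 - η*ξ)^t * |lam 0 - lamsharp| := by ring
end
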